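/- Let η_t ≤ η_{t-1} be positive reals, p ∈ Δ_d with p_i > 0, and ℓ ∈ [0,1]^d. Define v_i = p_i^{η_t/η_{t-1}} e^{-η_t ℓ_i} / Σ_j p_j^{η_t/η_{t-1}} e^{-η_t ℓ_j}. Then for every q ∈ Δ_d, (p - q)·ℓ ≤ Σ_i q_i ((1/η_{t-1}) ln(1/p_i) - (1/η_t) ln(1/v_i)) + (1/η_t - 1/η_{t-1}) ln d + η_{t-1}/8. -/

import Mathlib

open Real Finset

lemma hoeff_aux (μ : ℝ) (hμ0 : 0 ≤ μ) (hμ1 : μ ≤ 1) {t : ℝ} (ht : t ≤ 0) :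
    Real.log (1 - μ + μ * Real.exp t) ≤ t * μ + t ^ 2 / 8 := by
  set D : ℝ → ℝ := fun s => 1 - μ + μ * Real.exp s with hDdef
  have hD : ∀ s, 0 < D s := by
    intro s
    rcases eq_or_lt_of_le hμ0 with h | h
    · simp [hDdef, ← h]
    · have h2 : 0 < μ * Real.exp s := mul_pos h (Real.exp_pos s)
      simp only [hDdef]; linarith
  have hDd : ∀ s, HasDerivAt D (μ * Real.exp s) s := fun s =>
    ((Real.hasDerivAt_exp s).const_mul μ).const_add (1 - μ)
  set φ : ℝ → ℝ := fun s => μ + s / 4 - μ * Real.exp s / D s with hφdef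
  have hφd : ∀ s, HasDerivAt φ
      (1/4 - ((μ * Real.exp s) * D s - (μ * Real.exp s) * (μ * Real.exp s)) / (D s)^2) s := by
    intro s
    have h1 : HasDerivAt (fun s : ℝ => μ + s / 4) (1/4) s := by
      simpa using ((hasDerivAt_id s).div_const 4).const_add μ
    have h2 : HasDerivAt (fun s => μ * Real.exp s / D s)
        (((μ * Real.exp s) * D s - (μ * Real.exp s) * (μ * Real.exp s)) / (D s)^2) s :=
      ((Real.hasDerivAt_exp s).const_mul μ).div (hDd s) (hD s).ne'
    exact h1.sub h2
  have hφmono : Monotone φ := by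
    apply monotone_of_deriv_nonneg (fun s => (hφd s).differentiableAt)
    intro s
    rw [(hφd s).deriv]
    have hDs := hD s
    have he := Real.exp_pos s
    rw [sub_nonneg, div_le_iff₀ (by positivity)]
    simp only [hDdef] at hDs ⊢
    nlinarith [sq_nonneg (1 - μ - μ * Real.exp s), mul_nonneg hμ0 he.le]
  have hφ0 : φ 0 = 0 := by
    simp only [hφdef, hDdef, Real.exp_zero, mul_one]
    norm_num
  set g : ℝ → ℝ := fun s => s * μ + s^2/8 - Real.log (D s) with hgdef
  have hgd : ∀ s, HasDerivAt g (φ s) s := by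
    intro s
    have h1 : HasDerivAt (fun s : ℝ => s * μ) μ s := hasDerivAt_mul_const μ
    have h2 : HasDerivAt (fun s : ℝ => s^2/8) (2 * s^1 / 8) s :=
      (hasDerivAt_pow 2 s).div_const 8
    have h3 : HasDerivAt (fun s => Real.log (D s)) (μ * Real.exp s / D s) s :=
      (hDd s).log (hD s).ne'
    have : HasDerivAt g (μ + 2 * s ^ 1 / 8 - μ * Real.exp s / D s) s := (h1.add h2).sub h3
    convert this using 1
    simp only [hφdef]; ring
  have hg_anti : AntitoneOn g (Set.Iic 0) := by
    apply antitoneOn_of_deriv_nonpos (convex_Iic 0)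
    · exact (Differentiable.continuous fun s => (hgd s).differentiableAt).continuousOn
    · exact fun x _ => (hgd x).differentiableAt.differentiableWithinAt
    · intro x hx
      rw [(hgd x).deriv]
      have hx' : x ≤ 0 := le_of_lt (by simpa using hx)
      simpa [hφ0] using hφmono hx'
  have h := hg_anti (Set.mem_Iic.2 ht) (Set.mem_Iic.2 le_rfl) ht
  have hg0 : g 0 = 0 := by
    simp only [hgdef, hDdef, Real.exp_zero, mul_one]
    norm_num
  rw [hg0] at h
  simp only [hgdef, hDdef] at h
  linarith

lemma hoeff_sum {d : ℕ} (p ℓ : Fin d → ℝ) (hp : ∀ i, 0 ≤ p i) (hps : ∑ i, p i = 1)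
    (hℓ : ∀ i, ℓ i ∈ Set.Icc (0:ℝ) 1) {t : ℝ} (ht : t ≤ 0) :
    ∑ i, p i * Real.exp (t * ℓ i) ≤ Real.exp (t * (∑ i, p i * ℓ i) + t^2/8) := by
  set μ := ∑ i, p i * ℓ i with hμ
  have hμ0 : 0 ≤ μ := Finset.sum_nonneg fun i _ => mul_nonneg (hp i) (hℓ i).1
  have hμ1 : μ ≤ 1 := by
    rw [hμ, ← hps]
    exact Finset.sum_le_sum fun i _ => by
      nlinarith [(hℓ i).2, hp i]
  have step1 : ∀ i, Real.exp (t * ℓ i) ≤ 1 - ℓ i + ℓ i * Real.exp t := by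
    intro i
    obtain ⟨h0, h1⟩ := hℓ i
    have := convexOn_exp.2 (Set.mem_univ (0:ℝ)) (Set.mem_univ t)
      (by linarith : (0:ℝ) ≤ 1 - ℓ i) h0 (by ring)
    simp only [smul_eq_mul, mul_zero, zero_add, Real.exp_zero, mul_one] at this
    calc Real.exp (t * ℓ i) = Real.exp (ℓ i * t) := by rw [mul_comm]
    _ ≤ (1 - ℓ i) + ℓ i * Real.exp t := this
  have step2 : ∑ i, p i * Real.exp (t * ℓ i) ≤ 1 - μ + μ * Real.exp t := by
    calc ∑ i, p i * Real.exp (t * ℓ i)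
        ≤ ∑ i, p i * (1 - ℓ i + ℓ i * Real.exp t) :=
          Finset.sum_le_sum fun i _ => mul_le_mul_of_nonneg_left (step1 i) (hp i)
      _ = 1 - μ + μ * Real.exp t := by
          rw [Finset.sum_congr rfl (fun i _ => (by ring :
            p i * (1 - ℓ i + ℓ i * Real.exp t) = p i - p i * ℓ i + Real.exp t * (p i * ℓ i))),
            Finset.sum_add_distrib, Finset.sum_sub_distrib, ← Finset.mul_sum, hps, ← hμ]
          ring
  have hDpos : 0 < 1 - μ + μ * Real.exp t := by
    rcases eq_or_lt_of_le hμ0 with h | h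
    · simp [← h]
    · nlinarith [Real.exp_pos t]
  calc ∑ i, p i * Real.exp (t * ℓ i) ≤ 1 - μ + μ * Real.exp t := step2
    _ = Real.exp (Real.log (1 - μ + μ * Real.exp t)) := (Real.exp_log hDpos).symm
    _ ≤ Real.exp (t * μ + t^2/8) := Real.exp_le_exp.2 (hoeff_aux μ hμ0 hμ1 ht)

/-- Lemma 3 of the supplementary material: one-step regret bound for
exponential weights with a time-varying learning rate. -/
theorem stmt17 (d : ℕ) (hd : 1 ≤ d) (ηt ηt' : ℝ) (hη : 0 < ηt) (hη' : ηt ≤ ηt')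
    (p ℓ v q : Fin d → ℝ)
    (hp : ∀ i, 0 < p i) (hps : ∑ i, p i = 1)
    (hℓ : ∀ i, ℓ i ∈ Set.Icc (0 : ℝ) 1)
    (hv : ∀ i, v i = p i ^ (ηt / ηt') * Real.exp (-ηt * ℓ i)
        / ∑ j, p j ^ (ηt / ηt') * Real.exp (-ηt * ℓ j))
    (hq : ∀ i, 0 ≤ q i) (hqs : ∑ i, q i = 1) :
    ∑ i, (p i - q i) * ℓ i
      ≤ (∑ i, q i * ((1 / ηt') * Real.log (1 / p i) - (1 / ηt) * Real.log (1 / v i)))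
        + (1 / ηt - 1 / ηt') * Real.log d + ηt' / 8 := by
  have hηt'pos : 0 < ηt' := lt_of_lt_of_le hη hη'
  have hne : Nonempty (Fin d) := Fin.pos_iff_nonempty.mp hd
  set κ := ηt / ηt' with hκdef
  have hκ0 : 0 < κ := div_pos hη hηt'pos
  have hκ1 : κ ≤ 1 := (div_le_one hηt'pos).2 hη'
  set Z := ∑ j, p j ^ κ * Real.exp (-ηt * ℓ j) with hZ
  have hZpos : 0 < Z := Finset.sum_pos
    (fun j _ => mul_pos (Real.rpow_pos_of_pos (hp j) _) (Real.exp_pos _)) Finset.univ_nonempty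
  set μ := ∑ i, p i * ℓ i with hμ
  set S := ∑ j, p j * Real.exp (-ηt' * ℓ j) with hS
  have hSpos : 0 < S := Finset.sum_pos
    (fun j _ => mul_pos (hp j) (Real.exp_pos _)) Finset.univ_nonempty
  have hdpos : (0:ℝ) < d := by exact_mod_cast hd
  have hκη : κ * ηt' = ηt := by rw [hκdef]; field_simp
  have hterm : ∀ j, p j ^ κ * Real.exp (-ηt * ℓ j) = (p j * Real.exp (-ηt' * ℓ j)) ^ κ := by
    intro j
    rw [Real.mul_rpow (hp j).le (Real.exp_pos _).le, ← Real.exp_mul]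
    congr 2
    rw [hκdef]
    field_simp
  have jensen : (d:ℝ)⁻¹ * Z ≤ ((d:ℝ)⁻¹ * S) ^ κ := by
    have h := Real.arith_mean_le_rpow_mean Finset.univ (fun _ => (d:ℝ)⁻¹)
      (fun j => (p j * Real.exp (-ηt' * ℓ j)) ^ κ)
      (fun i _ => by positivity)
      (by rw [Finset.sum_const, Finset.card_univ, Fintype.card_fin, nsmul_eq_mul]
          field_simp)
      (fun i _ => Real.rpow_nonneg (mul_nonneg (hp i).le (Real.exp_pos _).le) _)
      (one_le_one_div hκ0 hκ1)
    have hz : ∀ j, ((p j * Real.exp (-ηt' * ℓ j)) ^ κ) ^ (1/κ) = p j * Real.exp (-ηt' * ℓ j) := by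
      intro j
      rw [← Real.rpow_mul (mul_nonneg (hp j).le (Real.exp_pos _).le),
        mul_one_div_cancel hκ0.ne', Real.rpow_one]
    simp only [hz, one_div_one_div] at h
    calc (d:ℝ)⁻¹ * Z = ∑ j, (d:ℝ)⁻¹ * (p j * Real.exp (-ηt' * ℓ j)) ^ κ := by
          rw [hZ, Finset.mul_sum]
          exact Finset.sum_congr rfl fun j _ => by rw [hterm j]
      _ ≤ (∑ j, (d:ℝ)⁻¹ * (p j * Real.exp (-ηt' * ℓ j))) ^ (1/(1/κ)) := by
          rw [one_div_one_div]; exact h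
      _ = ((d:ℝ)⁻¹ * S) ^ κ := by rw [one_div_one_div, hS, Finset.mul_sum]
  have hlogS : Real.log S ≤ -ηt' * μ + ηt'^2/8 := by
    have h := hoeff_sum p ℓ (fun i => (hp i).le) hps hℓ (t := -ηt') (by linarith)
    have h2 : Real.log S ≤ (-ηt') * μ + (-ηt')^2/8 := by
      calc Real.log S ≤ Real.log (Real.exp ((-ηt') * μ + (-ηt')^2/8)) :=
            Real.log_le_log hSpos h
        _ = (-ηt') * μ + (-ηt')^2/8 := Real.log_exp _
    nlinarith [h2]
  have hlogZ : Real.log Z ≤ (1 - κ) * Real.log d - ηt * μ + ηt * ηt' / 8 := by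
    have h1 : Z ≤ d * ((d:ℝ)⁻¹ * S) ^ κ := by
      have h0 : Z = d * ((d:ℝ)⁻¹ * Z) := by field_simp
      rw [h0]
      exact mul_le_mul_of_nonneg_left jensen hdpos.le
    calc Real.log Z ≤ Real.log (d * ((d:ℝ)⁻¹ * S) ^ κ) := Real.log_le_log hZpos h1
      _ = Real.log d + κ * Real.log ((d:ℝ)⁻¹ * S) := by
          rw [Real.log_mul hdpos.ne' (by positivity), Real.log_rpow (by positivity)]
      _ = Real.log d + κ * (Real.log S - Real.log d) := by
          rw [Real.log_mul (by positivity) hSpos.ne', Real.log_inv]; ring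
      _ = (1 - κ) * Real.log d + κ * Real.log S := by ring
      _ ≤ (1 - κ) * Real.log d + κ * (-ηt' * μ + ηt'^2/8) :=
          add_le_add_right (mul_le_mul_of_nonneg_left hlogS hκ0.le) _
      _ = (1 - κ) * Real.log d - ηt * μ + ηt * ηt' / 8 := by rw [← hκη]; ring
  have hlogv : ∀ i, Real.log (v i) = κ * Real.log (p i) + (-ηt * ℓ i) - Real.log Z := by
    intro i
    rw [hv i, Real.log_div (mul_pos (Real.rpow_pos_of_pos (hp i) _) (Real.exp_pos _)).ne'
      hZpos.ne', Real.log_mul (Real.rpow_pos_of_pos (hp i) _).ne' (Real.exp_pos _).ne',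
      Real.log_rpow (hp i), Real.log_exp]
  have hqterm : ∑ i, q i * ((1/ηt') * Real.log (1 / p i) - (1/ηt) * Real.log (1 / v i))
      = -(∑ i, q i * ℓ i) - (1/ηt) * Real.log Z := by
    have hstep : ∀ i, q i * ((1/ηt') * Real.log (1 / p i) - (1/ηt) * Real.log (1 / v i))
        = q i * (-ℓ i) - q i * ((1/ηt) * Real.log Z) := by
      intro i
      rw [one_div (p i), one_div (v i), Real.log_inv, Real.log_inv, hlogv i, hκdef]
      field_simp
      ring
    rw [Finset.sum_congr rfl (fun i _ => hstep i), Finset.sum_sub_distrib,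
      ← Finset.sum_mul, hqs, one_mul]
    simp only [mul_neg, Finset.sum_neg_distrib]
  rw [hqterm]
  have hsplit : ∑ i, (p i - q i) * ℓ i = μ - ∑ i, q i * ℓ i := by
    rw [hμ, ← Finset.sum_sub_distrib]
    exact Finset.sum_congr rfl fun i _ => by ring
  rw [hsplit]
  have h1 : (1 : ℝ) - κ = ηt * (1/ηt - 1/ηt') := by rw [hκdef]; field_simp
  rw [h1] at hlogZ
  have h3 : (1/ηt) * Real.log Z ≤ (1/ηt - 1/ηt') * Real.log d - μ + ηt'/8 := by
    have h4 := mul_le_mul_of_nonneg_left hlogZ (by positivity : (0:ℝ) ≤ 1/ηt)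
    have h5 : (1/ηt) * (ηt * (1/ηt - 1/ηt') * Real.log (d:ℝ) - ηt * μ + ηt * ηt'/8)
        = (1/ηt - 1/ηt') * Real.log (d:ℝ) - μ + ηt'/8 := by
      field_simp
    linarith [h4, h5.le, h5.ge]
  linarith [h3]
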